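/- For every n ∈ ℕ and every integer m not divisible by 3, with ω = (−1 + √−3)/2 ∈ ℂ, one has Σ_{k=0}^{n} C(n,k)^2 · ω^{m(2k−n)} = (−1)^n · T_n. -/

import Mathlib

/-- `ω = (-1 + √-3)/2`, a primitive cube root of unity. -/
noncomputable def omegaC : ℂ := (-1 + Real.sqrt 3 * Complex.I) / 2

/-- The central trinomial coefficient: the coefficient of `x^n` in `(x^2+x+1)^n`. -/
def centralTrinomial (n : ℕ) : ℕ :=
  ∑ k ∈ Finset.range (n / 2 + 1), Nat.choose n (2 * k) * Nat.choose (2 * k) k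

open Finset

-- helper: unconditional subset-chain identity
lemma choose_mul' (n k s : ℕ) (hsk : s ≤ k) :
    n.choose k * k.choose s = n.choose s * (n - s).choose (k - s) := by
  by_cases hkn : k ≤ n
  · exact Nat.choose_mul hsk
  · have h1 : n.choose k = 0 := Nat.choose_eq_zero_of_lt (by omega)
    rw [h1, Nat.zero_mul]
    by_cases hsn : s ≤ n
    · have h2 : (n - s).choose (k - s) = 0 := Nat.choose_eq_zero_of_lt (by omega)
      rw [h2, Nat.mul_zero]
    · have h2 : n.choose s = 0 := Nat.choose_eq_zero_of_lt (by omega)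
      rw [h2, Nat.zero_mul]

lemma key_nat (n k : ℕ) (hk : k ≤ n) :
    n.choose k ^ 2 =
      ∑ s ∈ range (k + 1), n.choose (2 * s) * (2 * s).choose s * (n - 2 * s).choose (k - s) := by
  have hterm : ∀ s ∈ range (k + 1),
      n.choose (2 * s) * (2 * s).choose s * (n - 2 * s).choose (k - s)
      = n.choose k * ((n - k).choose s * k.choose s) := by
    intro s hs
    have hsk : s ≤ k := by simpa [Nat.lt_succ_iff] using hs
    have h1 : n.choose (2 * s) * (2 * s).choose s = n.choose s * (n - s).choose s := by
      have := choose_mul' n (2 * s) s (by omega)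
      simpa [show 2 * s - s = s by omega] using this
    have h2 : (n - s).choose k * k.choose s = (n - s).choose s * (n - 2 * s).choose (k - s) := by
      have := choose_mul' (n - s) k s hsk
      simpa [show n - s - s = n - 2 * s by omega] using this
    have h3 : n.choose (s + k) * (s + k).choose s = n.choose s * (n - s).choose k := by
      have := choose_mul' n (s + k) s (by omega)
      simpa [show s + k - s = k by omega] using this
    have h4 : n.choose (s + k) * (s + k).choose k = n.choose k * (n - k).choose s := by
      have := choose_mul' n (s + k) k (by omega)
      simpa [show s + k - k = s by omega] using this
    have h5 : (s + k).choose s = (s + k).choose k := by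
      rw [← Nat.choose_symm (by omega : k ≤ s + k), show s + k - k = s by omega]
    calc n.choose (2 * s) * (2 * s).choose s * (n - 2 * s).choose (k - s)
        = (n.choose s * (n - s).choose s) * (n - 2 * s).choose (k - s) := by rw [h1]
      _ = n.choose s * ((n - s).choose s * (n - 2 * s).choose (k - s)) := by ring
      _ = n.choose s * ((n - s).choose k * k.choose s) := by rw [← h2]
      _ = (n.choose s * (n - s).choose k) * k.choose s := by ring
      _ = (n.choose (s + k) * (s + k).choose s) * k.choose s := by rw [h3]
      _ = (n.choose (s + k) * (s + k).choose k) * k.choose s := by rw [h5]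
      _ = (n.choose k * (n - k).choose s) * k.choose s := by rw [h4]
      _ = n.choose k * ((n - k).choose s * k.choose s) := by ring
  rw [Finset.sum_congr rfl hterm, ← Finset.mul_sum]
  have hv : ∑ s ∈ range (k + 1), (n - k).choose s * k.choose s = n.choose k := by
    have := Nat.add_choose_eq (n - k) k k
    rw [Finset.Nat.sum_antidiagonal_eq_sum_range_succ (fun a b => (n-k).choose a * k.choose b)] at this
    rw [show n - k + k = n by omega] at this
    rw [this]
    refine Finset.sum_congr rfl fun s hs => ?_
    have hsk : s ≤ k := by simpa [Nat.lt_succ_iff] using hs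
    rw [Nat.choose_symm hsk]
  rw [hv, sq]

lemma star_id (n : ℕ) (t : ℂ) :
    ∑ k ∈ range (n + 1), (n.choose k : ℂ) ^ 2 * t ^ k
    = ∑ j ∈ range (n / 2 + 1),
        ((n.choose (2 * j) * (2 * j).choose j : ℕ) : ℂ) * t ^ j * (1 + t) ^ (n - 2 * j) := by
  have step1 : ∑ k ∈ range (n + 1), (n.choose k : ℂ) ^ 2 * t ^ k
      = ∑ k ∈ range (n + 1), ∑ s ∈ range (k + 1),
          ((n.choose (2 * s) * (2 * s).choose s : ℕ) : ℂ)
            * ((n - 2 * s).choose (k - s) : ℂ) * t ^ k := by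
    refine Finset.sum_congr rfl fun k hk => ?_
    have hkn : k ≤ n := by simpa [Nat.lt_succ_iff] using hk
    rw [← Finset.sum_mul]
    congr 1
    have h := key_nat n k hkn
    rw [show ((n.choose k : ℂ)) ^ 2 = ((n.choose k ^ 2 : ℕ) : ℂ) by push_cast; ring, h,
      Nat.cast_sum]
    exact Finset.sum_congr rfl fun s _ => by push_cast; ring
  rw [step1]
  have step2 : ∑ k ∈ range (n + 1), ∑ s ∈ range (k + 1),
          ((n.choose (2 * s) * (2 * s).choose s : ℕ) : ℂ)
            * ((n - 2 * s).choose (k - s) : ℂ) * t ^ k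
      = ∑ s ∈ range (n + 1), ∑ k ∈ Finset.Ico s (n + 1),
          ((n.choose (2 * s) * (2 * s).choose s : ℕ) : ℂ)
            * ((n - 2 * s).choose (k - s) : ℂ) * t ^ k := by
    have := Finset.sum_Ico_Ico_comm 0 (n + 1)
      (fun s k => ((n.choose (2 * s) * (2 * s).choose s : ℕ) : ℂ)
            * ((n - 2 * s).choose (k - s) : ℂ) * t ^ k)
    simp only [Finset.range_eq_Ico] at *
    rw [← this]
  rw [step2]
  have step3 : ∀ s ∈ range (n + 1), ∑ k ∈ Finset.Ico s (n + 1),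
          ((n.choose (2 * s) * (2 * s).choose s : ℕ) : ℂ)
            * ((n - 2 * s).choose (k - s) : ℂ) * t ^ k
      = ((n.choose (2 * s) * (2 * s).choose s : ℕ) : ℂ) * t ^ s * (1 + t) ^ (n - 2 * s) := by
    intro s hs
    have hsn : s ≤ n := by simpa [Nat.lt_succ_iff] using hs
    rw [Finset.sum_Ico_eq_sum_range]
    have : ∀ i ∈ range (n + 1 - s),
        ((n.choose (2 * s) * (2 * s).choose s : ℕ) : ℂ)
            * ((n - 2 * s).choose (s + i - s) : ℂ) * t ^ (s + i)
        = ((n.choose (2 * s) * (2 * s).choose s : ℕ) : ℂ) * t ^ s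
            * (((n - 2 * s).choose i : ℂ) * t ^ i) := by
      intro i _
      rw [show s + i - s = i by omega, pow_add]
      ring
    rw [Finset.sum_congr rfl this, ← Finset.mul_sum]
    congr 1
    -- ∑ i in range (n+1-s), choose (n-2s) i * t^i = (1+t)^(n-2s)
    rw [add_comm (1 : ℂ) t, add_pow]
    simp only [one_pow, mul_one]
    rw [← Finset.sum_subset (Finset.range_subset_range.2 (by omega : n - 2 * s + 1 ≤ n + 1 - s))]
    · exact Finset.sum_congr rfl fun i _ => by ring
    · intro i _ hi
      have : n - 2 * s < i := by simpa [Nat.lt_succ_iff, not_le] using hi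
      simp [Nat.choose_eq_zero_of_lt this]
  rw [Finset.sum_congr rfl step3]
  rw [← Finset.sum_subset (Finset.range_subset_range.2 (by omega : n / 2 + 1 ≤ n + 1))]
  intro j _ hj
  have : n < 2 * j := by
    have := Finset.mem_range.not.mp hj
    omega
  simp [Nat.choose_eq_zero_of_lt this]

lemma omegaC_quad : omegaC ^ 2 + omegaC + 1 = 0 := by
  have h3 : ((Real.sqrt 3 : ℝ) : ℂ) ^ 2 = 3 := by
    rw [← Complex.ofReal_pow, Real.sq_sqrt (by norm_num : (0:ℝ) ≤ 3)]
    norm_num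
  have hI := Complex.I_sq
  unfold omegaC
  linear_combination (Complex.I ^ 2 / 4) * h3 + (3 / 4 : ℂ) * hI

lemma omegaC_cube : omegaC ^ 3 = 1 := by
  linear_combination (omegaC - 1) * omegaC_quad

lemma omegaC_ne_zero : omegaC ≠ 0 := by
  intro h
  have := omegaC_cube
  rw [h] at this
  norm_num at this

lemma omegaC_ne_one : omegaC ≠ 1 := by
  intro h
  have := omegaC_quad
  rw [h] at this
  norm_num at this

lemma omegaC_sq_ne_one : omegaC ^ 2 ≠ 1 := by
  intro h
  have hc := omegaC_cube
  rw [pow_succ, h, one_mul] at hc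
  exact omegaC_ne_one hc

theorem trinomial_omega_power_representation (n : ℕ) (m : ℤ) (hm : ¬ (3 ∣ m)) :
    ∑ k ∈ Finset.range (n + 1), (Nat.choose n k : ℂ) ^ 2
        * omegaC ^ (m * ((2 * k : ℤ) - n))
      = (-1 : ℂ) ^ n * centralTrinomial n := by
  set ζ : ℂ := omegaC ^ m with hζdef
  have hω0 := omegaC_ne_zero
  have hζ0 : ζ ≠ 0 := zpow_ne_zero m hω0
  have hω3 : omegaC ^ (3 : ℤ) = 1 := by
    rw [show (3:ℤ) = ((3:ℕ):ℤ) by norm_num, zpow_natCast, omegaC_cube]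
  have hζ3 : ζ ^ 3 = 1 := by
    rw [hζdef, ← zpow_natCast (omegaC ^ m) 3, ← zpow_mul, mul_comm, zpow_mul, zpow_natCast, omegaC_cube, one_zpow]
  have hζ1 : ζ ≠ 1 := by
    intro h
    have hmod : ζ = omegaC ^ (m % 3) := by
      rw [hζdef]
      conv_lhs => rw [show m = 3 * (m / 3) + m % 3 by omega]
      rw [zpow_add₀ hω0, zpow_mul, hω3, one_zpow, one_mul]
    have hr : m % 3 = 1 ∨ m % 3 = 2 := by omega
    rcases hr with hr | hr
    · rw [hr, zpow_one] at hmod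
      exact omegaC_ne_one (hmod ▸ h)
    · rw [hr, show (2:ℤ) = ((2:ℕ):ℤ) by norm_num, zpow_natCast] at hmod
      exact omegaC_sq_ne_one (hmod ▸ h)
  have hq : ζ ^ 2 + ζ + 1 = 0 := by
    have hf : (ζ - 1) * (ζ ^ 2 + ζ + 1) = 0 := by linear_combination hζ3
    rcases mul_eq_zero.mp hf with h | h
    · exact absurd (sub_eq_zero.mp h) hζ1
    · exact h
  -- Step A: rewrite the ω-powers as natural powers of ζ
  have hstep : ∀ k ∈ Finset.range (n + 1),
      (Nat.choose n k : ℂ) ^ 2 * omegaC ^ (m * ((2 * k : ℤ) - n))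
      = ((Nat.choose n k : ℂ) ^ 2 * (ζ ^ 2) ^ k) * ζ ^ (2 * n) := by
    intro k _
    rw [zpow_mul]
    have h1 : ζ ^ (((2 * (k + n) : ℕ)) : ℤ) = ζ ^ ((2 * k : ℤ) - n) * ζ ^ (((3 * n : ℕ)) : ℤ) := by
      rw [← zpow_add₀ hζ0]
      congr 1
      push_cast
      ring
    have h2 : ζ ^ (((3 * n : ℕ)) : ℤ) = 1 := by
      rw [zpow_natCast, pow_mul, hζ3, one_pow]
    have h3 : ζ ^ ((2 * k : ℤ) - n) = ζ ^ (2 * (k + n)) := by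
      rw [← zpow_natCast ζ (2 * (k + n)), h1, h2, mul_one]
    rw [h3, show 2 * (k + n) = 2 * k + 2 * n by ring, pow_add, pow_mul]
    ring
  rw [Finset.sum_congr rfl hstep, ← Finset.sum_mul, star_id n (ζ ^ 2)]
  have h1pz : 1 + ζ ^ 2 = -ζ := by linear_combination hq
  rw [h1pz, Finset.sum_mul]
  have hterm : ∀ j ∈ Finset.range (n / 2 + 1),
      ((Nat.choose n (2 * j) * Nat.choose (2 * j) j : ℕ) : ℂ) * (ζ ^ 2) ^ j
          * (-ζ) ^ (n - 2 * j) * ζ ^ (2 * n)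
      = (-1 : ℂ) ^ n * ((Nat.choose n (2 * j) * Nat.choose (2 * j) j : ℕ) : ℂ) := by
    intro j hj
    have h2j : 2 * j ≤ n := by
      have := Finset.mem_range.mp hj
      omega
    have e1 : ζ ^ (2 * j) * (ζ ^ (n - 2 * j) * ζ ^ (2 * n)) = 1 := by
      rw [← pow_add, ← pow_add, show 2 * j + (n - 2 * j + 2 * n) = 3 * n by omega,
        pow_mul, hζ3, one_pow]
    have e2 : (-1 : ℂ) ^ (n - 2 * j) = (-1) ^ n := by
      have ha : (-1 : ℂ) ^ n = (-1) ^ (n - 2 * j) * (-1) ^ (2 * j) := by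
        rw [← pow_add]
        congr 1
        omega
      have hb : (-1 : ℂ) ^ (2 * j) = 1 := by
        rw [pow_mul]
        norm_num
      rw [ha, hb, mul_one]
    have e3 : (-ζ) ^ (n - 2 * j) = (-1 : ℂ) ^ n * ζ ^ (n - 2 * j) := by
      rw [neg_pow, e2]
    calc ((Nat.choose n (2 * j) * Nat.choose (2 * j) j : ℕ) : ℂ) * (ζ ^ 2) ^ j
          * (-ζ) ^ (n - 2 * j) * ζ ^ (2 * n)
        = (-1 : ℂ) ^ n * ((Nat.choose n (2 * j) * Nat.choose (2 * j) j : ℕ) : ℂ)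
            * ((ζ ^ 2) ^ j * (ζ ^ (n - 2 * j) * ζ ^ (2 * n))) := by rw [e3]; ring
      _ = (-1 : ℂ) ^ n * ((Nat.choose n (2 * j) * Nat.choose (2 * j) j : ℕ) : ℂ) := by
          rw [← pow_mul ζ 2 j, e1, mul_one]
  rw [Finset.sum_congr rfl hterm, ← Finset.mul_sum]
  congr 1
  rw [centralTrinomial, Nat.cast_sum]
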